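/- arXiv:2110.13108 — 2 statements merged into one kernel-verified Lean document; each statement's English description precedes it below -/
import Mathlib

section
/- (Proposition 3) Let M₀ be a commutative von Neumann algebra. Then a projection P ∈ M₂(M₀) is a strict projection if and only if there exists a strict unitary U = [[u₁, u₂],[u₃, u₄]] ∈ M₂(M₀) such that P = [[u₁*u₁, u₁*u₂],[u₂*u₁, u₂*u₂]] and I₂ − P = [[u₃*u₃, u₃*u₄],[u₄*u₃, u₄*u₄]], where I₂ is the identity of M₂(M₀). -/
/-- A projection: `p = p* = p²`. -/
def IsProj {L : Type*} [Mul L] [Star L] (p : L) : Prop := star p = p ∧ p * p = p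

variable {K : Type} [NormedAddCommGroup K] [InnerProductSpace ℂ K] [CompleteSpace K]

/-- An element `a` of a von Neumann algebra `M₀` (with `0 ≤ a ≤ 1`) is strict in `M₀` if the
only projection of `M₀` below `a` is `0` and the only projection of `M₀` annihilating `a`
is `0`. -/
def StrictIn (M₀ : VonNeumannAlgebra K) (a : K →L[ℂ] K) : Prop :=
  (∀ p ∈ M₀, IsProj p → p ≤ a → p = 0) ∧ (∀ p ∈ M₀, IsProj p → p * a = 0 → p = 0)

/-- A strict positive element: `0 ≤ a ≤ 1` and `a` is strict in `M₀`. -/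
def StrictPos (M₀ : VonNeumannAlgebra K) (a : K →L[ℂ] K) : Prop :=
  0 ≤ a ∧ a ≤ 1 ∧ StrictIn M₀ a

/-- A general element `x ∈ M₀` is strict if `|x| = √(x* x)` is a strict positive element. -/
noncomputable def StrictElem (M₀ : VonNeumannAlgebra K) (x : K →L[ℂ] K) : Prop :=
  x ∈ M₀ ∧ StrictPos M₀ (CFC.sqrt (star x * x))

/-- `X` is an element of `M₂(M₀)`: all its entries lie in `M₀`. -/
def MemMat (M₀ : VonNeumannAlgebra K) (X : Matrix (Fin 2) (Fin 2) (K →L[ℂ] K)) : Prop :=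
  ∀ i j, X i j ∈ M₀

/-- The Loewner order on `M₂(B(K)) ≅ B(K ⊕ K)`: `X ≤ Y` iff `Y - X` is positive, i.e.
`Y - X = Z* Z` for some `Z`. -/
def MatLE (X Y : Matrix (Fin 2) (Fin 2) (K →L[ℂ] K)) : Prop :=
  ∃ Z : Matrix (Fin 2) (Fin 2) (K →L[ℂ] K), Y - X = star Z * Z

/-- A strict projection in `M₂(M₀)`: a projection `P = [[p₁, p],[p*, p₂]]` with entries in
`M₀`, `p₁` a strict positive element of `M₀` and `p₁ + p₂ = 1`. -/
def IsStrictProjMat (M₀ : VonNeumannAlgebra K)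
    (P : Matrix (Fin 2) (Fin 2) (K →L[ℂ] K)) : Prop :=
  MemMat M₀ P ∧ IsProj P ∧ StrictPos M₀ (P 0 0) ∧ P 0 0 + P 1 1 = 1

/-- A strict unitary in `M₂(M₀)`: a unitary all of whose entries are strict elements of `M₀`. -/
noncomputable def IsStrictUnitaryMat (M₀ : VonNeumannAlgebra K)
    (U : Matrix (Fin 2) (Fin 2) (K →L[ℂ] K)) : Prop :=
  MemMat M₀ U ∧ star U * U = 1 ∧ U * star U = 1 ∧ ∀ i j, StrictElem M₀ (U i j)


set_option synthInstance.maxHeartbeats 1000000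
set_option maxHeartbeats 2000000
set_option linter.unusedSectionVars false

section AuxLemmas
variable {K : Type} [NormedAddCommGroup K] [InnerProductSpace ℂ K] [CompleteSpace K]

lemma aux_commute_cfc {y a : K →L[ℂ] K} (h : Commute y a) (f : ℝ → ℝ) :
    Commute y (cfc f a) := by
  refine cfc_cases (fun x => Commute y x) a f (Commute.zero_right y) fun hf ha' => ?_
  have hcs : CompactSpace (spectrum ℝ a) :=
    ContinuousFunctionalCalculus.compactSpace_spectrum (R := ℝ) a
  suffices H : ∀ g : C(spectrum ℝ a, ℝ), Commute y (cfcHom ha' g) by exact H _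
  intro g
  have hclosed : IsClosed {g : C(spectrum ℝ a, ℝ) | Commute y (cfcHom ha' g)} := by
    have hc := (cfcHom_isClosedEmbedding ha' (R := ℝ)).continuous
    exact isClosed_eq ((continuous_mul_left y).comp hc) ((continuous_mul_right y).comp hc)
  have hpoly : (polynomialFunctions (spectrum ℝ a) : Set C(spectrum ℝ a, ℝ)) ⊆
      {g | Commute y (cfcHom ha' g)} := by
    intro g hg
    rw [SetLike.mem_coe, polynomialFunctions.eq_adjoin_X] at hg
    induction hg using Algebra.adjoin_induction with
    | mem u hu =>
      simp only [Set.mem_singleton_iff] at hu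
      subst hu
      have hX : (Polynomial.toContinuousMapOnAlgHom (spectrum ℝ a)) Polynomial.X =
          (ContinuousMap.id ℝ).restrict (spectrum ℝ a) := by
        ext x; simp
      simp only [Set.mem_setOf_eq, hX, cfcHom_id ha']
      exact h
    | algebraMap r =>
      simp only [Set.mem_setOf_eq, AlgHomClass.commutes]
      exact (Algebra.commutes r y).symm
    | add u v hu hv hu' hv' => simpa only [Set.mem_setOf_eq, map_add] using hu'.add_right hv'
    | mul u v hu hv hu' hv' => simpa only [Set.mem_setOf_eq, map_mul] using hu'.mul_right hv'
  have htop := polynomialFunctions.topologicalClosure (spectrum ℝ a)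
  have hg : g ∈ (polynomialFunctions (spectrum ℝ a)).topologicalClosure := by
    rw [htop]; trivial
  have hg' : g ∈ closure (polynomialFunctions (spectrum ℝ a) : Set C(spectrum ℝ a, ℝ)) := hg
  exact (hclosed.closure_subset_iff.mpr hpoly) hg'

lemma aux_commute_sqrt {y a : K →L[ℂ] K} (h : Commute y a) (ha : 0 ≤ a) :
    Commute y (CFC.sqrt a) := by
  rw [CFC.sqrt_eq_cfc, cfc_nnreal_eq_real NNReal.sqrt a ha]
  exact aux_commute_cfc h _

lemma aux_sqrt_le_one {a : K →L[ℂ] K} (h0 : 0 ≤ a) (h1 : a ≤ 1) : CFC.sqrt a ≤ 1 := by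
  rw [← CStarAlgebra.norm_le_one_iff_of_nonneg _ (CFC.sqrt_nonneg _)]
  have h2 : ‖CFC.sqrt a‖ * ‖CFC.sqrt a‖ = ‖a‖ := by
    rw [← CStarRing.norm_star_mul_self]
    congr 1
    rw [IsSelfAdjoint.star_eq (IsSelfAdjoint.of_nonneg (CFC.sqrt_nonneg _)), CFC.sqrt_mul_sqrt_self a]
  nlinarith [norm_nonneg (CFC.sqrt a), (CStarAlgebra.norm_le_one_iff_of_nonneg a h0).mpr h1]

lemma aux_mem_of_commute (M₀ : VonNeumannAlgebra K) {z : K →L[ℂ] K}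
    (h : ∀ y : K →L[ℂ] K, (∀ g ∈ M₀, g * y = y * g) → y * z = z * y) : z ∈ M₀ := by
  rw [← SetLike.mem_coe, ← M₀.centralizer_centralizer]
  exact Set.mem_centralizer_iff.mpr fun y hy => h y fun g hg => Set.mem_centralizer_iff.mp hy g hg

lemma aux_proj_le {q a : K →L[ℂ] K} (hq : IsProj q) (ha : 0 ≤ a)
    (h1 : a * q = q) (h2 : q * a = q) : q ≤ a := by
  rw [← sub_nonneg]
  have e1 : (1 - q) * a = a - q := by rw [sub_mul, one_mul, h2]
  have key : a - q = star (1 - q) * a * (1 - q) := by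
    rw [star_sub, star_one, hq.1, e1, sub_mul, mul_sub, mul_sub, mul_one, mul_one, h1, hq.2,
      sub_self, sub_zero]
  rw [key]
  exact star_left_conjugate_nonneg ha _

lemma aux_proj_absorb {q a : K →L[ℂ] K} (hq : IsProj q) (hsa : IsSelfAdjoint a)
    (h1 : a ≤ 1) (hle : q ≤ a) : a * q = q ∧ q * a = q := by
  have hsq : star q = q := hq.1
  have hqq : q * q = q := hq.2
  have hupper : q * a * q ≤ q := by
    have := star_left_conjugate_le_conjugate h1 q
    rwa [hsq, mul_one, hqq] at this
  have hlower : q ≤ q * a * q := by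
    have := star_left_conjugate_le_conjugate hle q
    rwa [hsq, hqq, hqq] at this
  have h2 : q * a * q = q := le_antisymm hupper hlower
  have hb0 : (0 : K →L[ℂ] K) ≤ 1 - a := sub_nonneg.mpr h1
  have hqbq : q * (1 - a) * q = 0 := by
    rw [mul_sub, mul_one, sub_mul, h2, hqq, sub_self]
  have h3 : CFC.sqrt (1 - a) * q = 0 := by
    rw [← CStarRing.star_mul_self_eq_zero_iff]
    rw [star_mul, hsq, IsSelfAdjoint.star_eq (IsSelfAdjoint.of_nonneg (CFC.sqrt_nonneg _)),
      mul_assoc, ← mul_assoc (CFC.sqrt (1 - a)), CFC.sqrt_mul_sqrt_self _ hb0, ← mul_assoc, hqbq]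
  have h4 : (1 - a) * q = 0 := by
    rw [← CFC.sqrt_mul_sqrt_self _ hb0, mul_assoc, h3, mul_zero]
  have haq : a * q = q := by
    rw [sub_mul, one_mul, sub_eq_zero] at h4; exact h4.symm
  refine ⟨haq, ?_⟩
  calc q * a = star (a * q) := by rw [star_mul, hsq, hsa.star_eq]
  _ = q := by rw [haq, hsq]

lemma aux_strict_one_sub (M₀ : VonNeumannAlgebra K) {a : K →L[ℂ] K}
    (h0 : 0 ≤ a) (h1 : a ≤ 1) (h : StrictIn M₀ a) : StrictIn M₀ (1 - a) := by
  have hsa : IsSelfAdjoint a := IsSelfAdjoint.of_nonneg h0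
  have hb1 : (1 : K →L[ℂ] K) - a ≤ 1 := by
    have := sub_le_sub_left h0 (1 : K →L[ℂ] K)
    simpa using this
  constructor
  · intro q hqm hq hle
    have habs := aux_proj_absorb hq (IsSelfAdjoint.of_nonneg (sub_nonneg.mpr h1)) hb1 hle
    have haq : a * q = 0 := by
      have := habs.1
      rw [sub_mul, one_mul, sub_eq_self] at this
      exact this
    have hqa : q * a = 0 := by
      calc q * a = star (a * q) := by rw [star_mul, hq.1, hsa.star_eq]
      _ = 0 := by rw [haq, star_zero]
    exact h.2 q hqm hq hqa
  · intro q hqm hq hmul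
    have h2 : q * a = q := by
      rw [mul_sub, mul_one, sub_eq_zero] at hmul
      exact hmul.symm
    have h3 : a * q = q := by
      calc a * q = star (q * a) := by rw [star_mul, hq.1, hsa.star_eq]
      _ = q := by rw [h2, hq.1]
    exact h.1 q hqm hq (aux_proj_le hq h0 h3 h2)

lemma aux_strict_sqrt (M₀ : VonNeumannAlgebra K) {a : K →L[ℂ] K}
    (h0 : 0 ≤ a) (h1 : a ≤ 1) (h : StrictIn M₀ a) : StrictIn M₀ (CFC.sqrt a) := by
  have hs0 : (0 : K →L[ℂ] K) ≤ CFC.sqrt a := (CFC.sqrt_nonneg _)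
  have hs1 : CFC.sqrt a ≤ 1 := aux_sqrt_le_one h0 h1
  constructor
  · intro q hqm hq hle
    have habs := aux_proj_absorb hq (IsSelfAdjoint.of_nonneg hs0) hs1 hle
    have haq : a * q = q := by
      rw [← CFC.sqrt_mul_sqrt_self a h0, mul_assoc, habs.1, habs.1]
    have hqa : q * a = q := by
      rw [← CFC.sqrt_mul_sqrt_self a h0, ← mul_assoc, habs.2, habs.2]
    exact h.1 q hqm hq (aux_proj_le hq h0 haq hqa)
  · intro q hqm hq hmul
    have : q * a = 0 := by
      rw [← CFC.sqrt_mul_sqrt_self a h0, ← mul_assoc, hmul, zero_mul]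
    exact h.2 q hqm hq this

lemma aux_injective (M₀ : VonNeumannAlgebra K) {a : K →L[ℂ] K} (ham : a ∈ M₀)
    (hsa : IsSelfAdjoint a)
    (h : ∀ p ∈ M₀, IsProj p → p * a = 0 → p = 0) : ∀ x, a x = 0 → x = 0 := by
  set S := LinearMap.ker (a : K →ₗ[ℂ] K) with hS
  haveI : CompleteSpace S := (ContinuousLinearMap.isClosed_ker a).completeSpace_coe
  set q : K →L[ℂ] K := S.subtypeL.comp S.orthogonalProjectionOnto with hqdef
  have hqx : ∀ x, q x = (S.orthogonalProjectionOnto x : K) := fun x => rfl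
  have hq_range : ∀ x, q x ∈ S := fun x => (S.orthogonalProjectionOnto x).2
  have hqfix : ∀ x, x ∈ S → q x = x := by
    intro x hx
    have := Submodule.orthogonalProjectionOnto_mem_subspace_eq_self (K := S) ⟨x, hx⟩
    rw [hqx]
    exact congrArg Subtype.val this
  have hqsa : IsSelfAdjoint q := isSelfAdjoint_starProjection S
  have haq : a * q = 0 := by
    ext x
    exact LinearMap.mem_ker.mp (hq_range x)
  have hqa : q * a = 0 := by
    calc q * a = star (a * q) := by rw [star_mul, hqsa.star_eq, hsa.star_eq]
    _ = 0 := by rw [haq, star_zero]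
  have hqproj : IsProj q := by
    refine ⟨hqsa.star_eq, ?_⟩
    ext x
    exact hqfix (q x) (hq_range x)
  have hqmem : q ∈ M₀ := by
    apply aux_mem_of_commute
    intro y hy
    have hcy : ∀ w : K →L[ℂ] K, w * a = a * w → q * w * q = w * q := by
      intro w hw
      ext x
      have hmem : w (q x) ∈ S := by
        rw [LinearMap.mem_ker]
        have h1 : a (w (q x)) = w (a (q x)) := by
          have h2 := congrFun (congrArg DFunLike.coe hw) (q x)
          simpa using h2.symm
        show a (w (q x)) = 0
        have hz : a (q x) = 0 := LinearMap.mem_ker.mp (hq_range x)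
        rw [h1, hz, map_zero]
      calc (q * w * q) x = q (w (q x)) := rfl
      _ = w (q x) := hqfix _ hmem
      _ = (w * q) x := rfl
    have h1 : q * y * q = y * q := hcy y (hy a ham).symm
    have h2 : q * star y * q = star y * q := by
      refine hcy (star y) ?_
      have := congrArg star (hy a ham)
      rwa [star_mul, star_mul, hsa.star_eq] at this
    calc y * q = star (q * star y * q) := by
          rw [star_mul, star_mul, star_star, hqsa.star_eq, ← mul_assoc, h1]
    _ = star (star y * q) := by rw [h2]
    _ = q * y := by rw [star_mul, star_star, hqsa.star_eq]
  have hq0 : q = 0 := h q hqmem hqproj hqa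
  intro x hx
  have := hqfix x (LinearMap.mem_ker.mpr hx)
  rw [hq0] at this
  simpa using this.symm

lemma aux_norm_apply_eq {p c : K →L[ℂ] K} (h : star p * p = star c * c) (x : K) :
    ‖p x‖ = ‖c x‖ := by
  have key : ∀ w : K →L[ℂ] K, (‖w x‖ : ℝ) ^ 2 = RCLike.re (inner ℂ x ((star w * w) x) : ℂ) := by
    intro w
    have e1 : (inner ℂ (w x) (w x) : ℂ) = inner ℂ x ((star w * w) x) := by
      rw [ContinuousLinearMap.star_eq_adjoint]
      exact (ContinuousLinearMap.adjoint_inner_right w x (w x)).symm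
    rw [← inner_self_eq_norm_sq (𝕜 := ℂ), e1]
  have h1 : (‖p x‖ : ℝ) ^ 2 = ‖c x‖ ^ 2 := by rw [key p, key c, h]
  nlinarith [norm_nonneg (p x), norm_nonneg (c x)]

lemma aux_cancel_left {D c : K →L[ℂ] K} (hinj : ∀ x, c x = 0 → x = 0)
    (h : c * D = 0) : D = 0 := by
  ext y
  have h1 : c (D y) = 0 := by
    have := congrFun (congrArg DFunLike.coe h) y
    simpa using this
  simpa using hinj _ h1

lemma aux_cancel_right {D c : K →L[ℂ] K} (hcsa : IsSelfAdjoint c)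
    (hinj : ∀ x, c x = 0 → x = 0) (h : D * c = 0) : D = 0 := by
  have h2 : c * star D = 0 := by
    have := congrArg star h
    rwa [star_mul, hcsa.star_eq, star_zero] at this
  have h3 : star D = 0 := aux_cancel_left hinj h2
  rw [← star_star D, h3, star_zero]

lemma aux_exists_iso {p c : K →L[ℂ] K} (hcsa : IsSelfAdjoint c)
    (heq : star p * p = star c * c)
    (hinj : ∀ x, c x = 0 → x = 0) :
    ∃ v : K →L[ℂ] K, v * c = p := by
  classical
  have hnorm : ∀ x, ‖p x‖ = ‖c x‖ := aux_norm_apply_eq heq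
  set cl : K →ₗ[ℂ] K := (c : K →ₗ[ℂ] K) with hcl
  have hclinj : Function.Injective cl := by
    intro x y hxy
    have h1 : c (x - y) = 0 := by
      rw [map_sub]
      rw [sub_eq_zero]
      exact hxy
    have := hinj _ h1
    rwa [sub_eq_zero] at this
  set S : Submodule ℂ K := LinearMap.range cl with hSdef
  set E := LinearEquiv.ofInjective cl hclinj with hEdef
  set f0 : S →ₗ[ℂ] K := (p : K →ₗ[ℂ] K).comp (E.symm : S →ₗ[ℂ] K) with hf0
  have happ : ∀ (x : K) (hm : cl x ∈ S), f0 ⟨cl x, hm⟩ = p x := by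
    intro x hm
    have h1 : E x = ⟨cl x, hm⟩ := Subtype.ext (by rw [LinearEquiv.ofInjective_apply])
    have h2 : E.symm ⟨cl x, hm⟩ = x := by rw [← h1, LinearEquiv.symm_apply_apply]
    show p (E.symm ⟨cl x, hm⟩) = p x
    rw [h2]
  have hbound : ∀ s : S, ‖f0 s‖ ≤ 1 * ‖s‖ := by
    rintro ⟨-, x, rfl⟩
    rw [happ x ⟨x, rfl⟩, one_mul]
    show ‖p x‖ ≤ ‖cl x‖
    exact le_of_eq (hnorm x)
  set f : S →L[ℂ] K := f0.mkContinuous 1 hbound with hf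
  have hdense : DenseRange (S.subtypeL : S →L[ℂ] K) := by
    have horth : Sᗮ = ⊥ := by
      rw [Submodule.eq_bot_iff]
      intro y hy
      have h1 : (inner ℂ (c (c y)) y : ℂ) = 0 :=
        (Submodule.mem_orthogonal S y).mp hy _ ⟨c y, rfl⟩
      have h2 : (inner ℂ (c y) (c y) : ℂ) = 0 := by
        rw [← h1]
        have := (ContinuousLinearMap.adjoint_inner_right c (c y) y).symm
        rw [this]
        congr 1
        rw [← ContinuousLinearMap.star_eq_adjoint, hcsa.star_eq]
      exact hinj y (inner_self_eq_zero.mp h2)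
    have htop : S.topologicalClosure = ⊤ := Submodule.topologicalClosure_eq_top_iff.mpr horth
    have hdense' : Dense (S : Set K) := Submodule.dense_iff_topologicalClosure_eq_top.mpr htop
    have hrange : Set.range (S.subtypeL : S → K) = (S : Set K) := Subtype.range_coe
    rw [DenseRange, hrange]
    exact hdense'
  have huni : IsUniformInducing (S.subtypeL : S →L[ℂ] K) := by
    have : Isometry (S.subtypeL : S → K) := isometry_subtype_coe
    exact this.isUniformInducing
  refine ⟨f.extend S.subtypeL, ?_⟩
  ext x
  have hmem : cl x ∈ S := ⟨x, rfl⟩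
  have h1 : (f.extend S.subtypeL) (S.subtypeL ⟨cl x, hmem⟩) = f ⟨cl x, hmem⟩ :=
    ContinuousLinearMap.extend_eq (e := S.subtypeL) f hdense huni ⟨cl x, hmem⟩
  have h2 : f ⟨cl x, hmem⟩ = f0 ⟨cl x, hmem⟩ := rfl
  show (f.extend S.subtypeL) (c x) = p x
  have h3 : S.subtypeL ⟨cl x, hmem⟩ = c x := rfl
  rw [← h3, h1, h2, happ x hmem]

lemma aux_sqrt_mem (M₀ : VonNeumannAlgebra K) {a : K →L[ℂ] K} (ha : a ∈ M₀) (h0 : 0 ≤ a) :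
    CFC.sqrt a ∈ M₀ :=
  aux_mem_of_commute M₀ fun y hy => aux_commute_sqrt ((hy a ha).symm) h0

end AuxLemmas

/-- Proposition 3: a projection `P` in `M₂(M₀)` (`M₀` a commutative von Neumann
algebra) is a strict projection iff there is a strict unitary `U = [[u₁,u₂],[u₃,u₄]]` with
`P = [[u₁*u₁, u₁*u₂],[u₂*u₁, u₂*u₂]]` and `I₂ - P = [[u₃*u₃, u₃*u₄],[u₄*u₃, u₄*u₄]]`. -/
theorem statement5 (M₀ : VonNeumannAlgebra K)
    (hcomm : ∀ x ∈ M₀, ∀ y ∈ M₀, x * y = y * x)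
    {P : Matrix (Fin 2) (Fin 2) (K →L[ℂ] K)} (hmem : MemMat M₀ P) (hproj : IsProj P) :
    IsStrictProjMat M₀ P ↔
      ∃ U : Matrix (Fin 2) (Fin 2) (K →L[ℂ] K), IsStrictUnitaryMat M₀ U ∧
        P = !![star (U 0 0) * U 0 0, star (U 0 0) * U 0 1;
               star (U 0 1) * U 0 0, star (U 0 1) * U 0 1] ∧
        1 - P = !![star (U 1 0) * U 1 0, star (U 1 0) * U 1 1;
                   star (U 1 1) * U 1 0, star (U 1 1) * U 1 1] := by
  constructor
  · rintro ⟨hmemP, hP, ⟨h01, h11, hstrict⟩, hsum⟩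
    have hstarP : star P = P := hproj.1
    have hPP : P * P = P := hproj.2
    have hpm : P 0 1 ∈ M₀ := hmemP 0 1
    have hp1m : P 0 0 ∈ M₀ := hmemP 0 0
    have hP10 : P 1 0 = star (P 0 1) := by
      calc P 1 0 = (star P) 1 0 := by rw [hstarP]
      _ = star (P 0 1) := Matrix.star_apply _ _ _
    have hsa1 : IsSelfAdjoint (P 0 0) := IsSelfAdjoint.of_nonneg h01
    have hP11 : P 1 1 = 1 - P 0 0 := eq_sub_of_add_eq' hsum
    have hsq00 : P 0 0 * P 0 0 + P 0 1 * P 1 0 = P 0 0 := by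
      have h := congrFun (congrFun hPP 0) 0
      rwa [Matrix.mul_apply, Fin.sum_univ_two] at h
    have hppstar : P 0 1 * star (P 0 1) = P 0 0 * (1 - P 0 0) := by
      have h1 : P 0 1 * star (P 0 1) = P 0 0 - P 0 0 * P 0 0 := by
        rw [← hP10]
        exact eq_sub_of_add_eq' hsq00
      rw [h1, mul_sub, mul_one]
    have hstarpp : star (P 0 1) * P 0 1 = P 0 0 * (1 - P 0 0) := by
      rw [← hcomm (P 0 1) hpm (star (P 0 1)) (star_mem hpm), hppstar]
    have h02 : (0 : K →L[ℂ] K) ≤ 1 - P 0 0 := sub_nonneg.mpr h11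
    have h12 : (1 : K →L[ℂ] K) - P 0 0 ≤ 1 := by
      simpa using sub_le_sub_left h01 (1 : K →L[ℂ] K)
    set s₁ : K →L[ℂ] K := CFC.sqrt (P 0 0) with hs₁def
    set s₂ : K →L[ℂ] K := CFC.sqrt (1 - P 0 0) with hs₂def
    set cc : K →L[ℂ] K := CFC.sqrt (star (P 0 1) * P 0 1) with hccdef
    have hs₁m : s₁ ∈ M₀ := aux_sqrt_mem M₀ hp1m h01
    have hs₂m : s₂ ∈ M₀ := aux_sqrt_mem M₀ (sub_mem (one_mem M₀) hp1m) h02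
    have st₁ : star s₁ = s₁ := (IsSelfAdjoint.of_nonneg (CFC.sqrt_nonneg _)).star_eq
    have st₂ : star s₂ = s₂ := (IsSelfAdjoint.of_nonneg (CFC.sqrt_nonneg _)).star_eq
    have hs₁s₁ : s₁ * s₁ = P 0 0 := CFC.sqrt_mul_sqrt_self _ h01
    have hs₂s₂ : s₂ * s₂ = 1 - P 0 0 := CFC.sqrt_mul_sqrt_self _ h02
    have hc1 : Commute (P 0 0) s₂ :=
      aux_commute_sqrt ((Commute.one_right (P 0 0)).sub_right (Commute.refl (P 0 0))) h02
    have hc21 : Commute s₂ s₁ := aux_commute_sqrt hc1.symm h01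
    have hccsa : IsSelfAdjoint cc := IsSelfAdjoint.of_nonneg (CFC.sqrt_nonneg _)
    have hcc : cc = s₁ * s₂ := by
      have hb0 : (0 : K →L[ℂ] K) ≤ s₁ * s₂ := by
        set t : K →L[ℂ] K := CFC.sqrt s₁ with htdef
        have htt : t * t = s₁ := CFC.sqrt_mul_sqrt_self _ (CFC.sqrt_nonneg _)
        have hct : Commute s₂ t := aux_commute_sqrt hc21 (CFC.sqrt_nonneg _)
        have hstt : star t = t := (IsSelfAdjoint.of_nonneg (CFC.sqrt_nonneg _)).star_eq
        have e1 : s₁ * s₂ = t * (t * s₂) := by rw [← mul_assoc, htt]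
        have e : s₁ * s₂ = t * s₂ * t := by rw [e1, mul_assoc t s₂ t, hct.eq]
        rw [e]
        have h0' := star_left_conjugate_nonneg (show (0 : K →L[ℂ] K) ≤ s₂ from (CFC.sqrt_nonneg _)) t
        rwa [hstt] at h0'
      have hbb : (s₁ * s₂) * (s₁ * s₂) = star (P 0 1) * P 0 1 := by
        rw [hstarpp]
        calc (s₁ * s₂) * (s₁ * s₂) = s₁ * (s₂ * s₁) * s₂ := by noncomm_ring
        _ = s₁ * (s₁ * s₂) * s₂ := by rw [hc21.eq]
        _ = (s₁ * s₁) * (s₂ * s₂) := by noncomm_ring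
        _ = P 0 0 * (1 - P 0 0) := by rw [hs₁s₁, hs₂s₂]
      exact CFC.sqrt_unique hbb hb0
    have hinj₁ : ∀ x, P 0 0 x = 0 → x = 0 := aux_injective M₀ hp1m hsa1 hstrict.2
    have hstrict2 : StrictIn M₀ (1 - P 0 0) := aux_strict_one_sub M₀ h01 h11 hstrict
    have hinj₂ : ∀ x, (1 - P 0 0) x = 0 → x = 0 :=
      aux_injective M₀ (sub_mem (one_mem M₀) hp1m) (IsSelfAdjoint.of_nonneg h02) hstrict2.2
    have hinjs₁ : ∀ x, s₁ x = 0 → x = 0 := by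
      intro x hx
      refine hinj₁ x ?_
      rw [← hs₁s₁]
      show s₁ (s₁ x) = 0
      rw [hx, map_zero]
    have hinjs₂ : ∀ x, s₂ x = 0 → x = 0 := by
      intro x hx
      refine hinj₂ x ?_
      rw [← hs₂s₂]
      show s₂ (s₂ x) = 0
      rw [hx, map_zero]
    have hinjc : ∀ x, cc x = 0 → x = 0 := by
      intro x hx
      rw [hcc] at hx
      exact hinjs₂ x (hinjs₁ (s₂ x) hx)
    have heqcc : star (P 0 1) * P 0 1 = star cc * cc := by
      rw [hccsa.star_eq, hccdef, CFC.sqrt_mul_sqrt_self _ (star_mul_self_nonneg (P 0 1))]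
    obtain ⟨v, hvc⟩ := aux_exists_iso hccsa heqcc hinjc
    have hvvst : star v * v = 1 := by
      have h1 : cc * ((star v * v - 1) * cc) = 0 := by
        have h2 : cc * ((star v * v - 1) * cc) = star (v * cc) * (v * cc) - star cc * cc := by
          rw [star_mul v cc, hccsa.star_eq]
          noncomm_ring
        rw [h2, hvc, heqcc, sub_self]
      have h3 : (star v * v - 1) * cc = 0 := aux_cancel_left hinjc h1
      have h4 := aux_cancel_right hccsa hinjc h3
      rwa [sub_eq_zero] at h4
    have hinjps : ∀ x, star (P 0 1) x = 0 → x = 0 := by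
      have heq2 : star (star (P 0 1)) * star (P 0 1) = star cc * cc := by
        rw [star_star, hppstar, ← hstarpp, heqcc]
      intro x hx
      have h5 := aux_norm_apply_eq heq2 x
      rw [hx, norm_zero] at h5
      have h6 : cc x = 0 := by
        have h7 := h5.symm
        rwa [norm_eq_zero] at h7
      exact hinjc x h6
    have hvv' : v * star v = 1 := by
      have h1 : (v * star v - 1) * (P 0 1) = 0 := by
        rw [← hvc]
        calc (v * star v - 1) * (v * cc) = v * ((star v * v) * cc) - v * cc := by noncomm_ring
        _ = 0 := by rw [hvvst, one_mul, sub_self]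
      have h2 : star (P 0 1) * (v * star v - 1) = 0 := by
        have h3 := congrArg star h1
        rwa [star_mul, star_sub, star_mul, star_star, star_one, star_zero] at h3
      have h4 := aux_cancel_left hinjps h2
      rwa [sub_eq_zero] at h4
    have hvmem : v ∈ M₀ := by
      apply aux_mem_of_commute
      intro y hy
      have hyc : Commute y cc :=
        aux_commute_sqrt ((hy _ (mul_mem (star_mem hpm) hpm)).symm) (star_mul_self_nonneg _)
      have hyp : y * P 0 1 = P 0 1 * y := (hy _ hpm).symm
      have hD : (y * v - v * y) * cc = 0 := by
        have e1 : (y * v) * cc = y * P 0 1 := by rw [mul_assoc, hvc]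
        have e2 : (v * y) * cc = P 0 1 * y := by
          rw [mul_assoc, hyc.eq, ← mul_assoc, hvc]
        rw [sub_mul, e1, e2, hyp, sub_self]
      have h4 := aux_cancel_right hccsa hinjc hD
      rwa [sub_eq_zero] at h4
    have hsvm : star v ∈ M₀ := star_mem hvmem
    have hvs₁ : s₁ * v = v * s₁ := hcomm s₁ hs₁m v hvmem
    have hvs₂ : s₂ * v = v * s₂ := hcomm s₂ hs₂m v hvmem
    have hvs₁' : s₁ * star v = star v * s₁ := hcomm s₁ hs₁m (star v) hsvm
    have hvs₂' : s₂ * star v = star v * s₂ := hcomm s₂ hs₂m (star v) hsvm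
    have hkey : s₁ * (v * s₂) = P 0 1 := by
      calc s₁ * (v * s₂) = (s₁ * v) * s₂ := by rw [mul_assoc]
      _ = v * (s₁ * s₂) := by rw [hvs₁, mul_assoc]
      _ = v * cc := by rw [hcc]
      _ = P 0 1 := hvc
    have hkey2 : s₂ * (v * s₁) = P 0 1 := by
      calc s₂ * (v * s₁) = (s₂ * v) * s₁ := by rw [mul_assoc]
      _ = v * (s₂ * s₁) := by rw [hvs₂, mul_assoc]
      _ = v * cc := by rw [hc21.eq, hcc]
      _ = P 0 1 := hvc
    have hconj : ∀ w : K →L[ℂ] K, w ∈ M₀ → v * w * star v = w := by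
      intro w hw
      rw [mul_assoc, hcomm w hw (star v) hsvm, ← mul_assoc, hvv', one_mul]
    have hsv21 : star (v * s₂) = s₂ * star v := by rw [star_mul, st₂]
    have hsv11 : star (v * s₁) = s₁ * star v := by rw [star_mul, st₁]
    have A00 : star s₁ * s₁ + star s₂ * s₂ = 1 := by
      rw [st₁, st₂, hs₁s₁, hs₂s₂]
      abel
    have A01 : star s₁ * (v * s₂) + star s₂ * -(v * s₁) = 0 := by
      rw [st₁, st₂, mul_neg, hkey, hkey2]
      abel
    have A10 : star (v * s₂) * s₁ + star (-(v * s₁)) * s₂ = 0 := by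
      rw [star_neg, hsv21, hsv11, neg_mul]
      have e1 : s₂ * star v * s₁ = (s₂ * s₁) * star v := by
        rw [mul_assoc, ← hvs₁', ← mul_assoc]
      have e2 : s₁ * star v * s₂ = (s₁ * s₂) * star v := by
        rw [mul_assoc, ← hvs₂', ← mul_assoc]
      rw [e1, e2, hc21.eq]
      abel
    have e₂vv : s₂ * star v * (v * s₂) = 1 - P 0 0 := by
      calc s₂ * star v * (v * s₂) = s₂ * (star v * v) * s₂ := by noncomm_ring
      _ = s₂ * s₂ := by rw [hvvst, mul_one]
      _ = 1 - P 0 0 := hs₂s₂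
    have e₁vv : s₁ * star v * (v * s₁) = P 0 0 := by
      calc s₁ * star v * (v * s₁) = s₁ * (star v * v) * s₁ := by noncomm_ring
      _ = s₁ * s₁ := by rw [hvvst, mul_one]
      _ = P 0 0 := hs₁s₁
    have A11 : star (v * s₂) * (v * s₂) + star (-(v * s₁)) * -(v * s₁) = 1 := by
      rw [star_neg, hsv21, hsv11, neg_mul_neg, e₂vv, e₁vv]
      abel
    have B00 : s₁ * star s₁ + (v * s₂) * star (v * s₂) = 1 := by
      rw [st₁, hsv21]
      have e1 : (v * s₂) * (s₂ * star v) = v * (s₂ * s₂) * star v := by noncomm_ring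
      rw [e1, hs₂s₂, hconj _ (sub_mem (one_mem M₀) hp1m), hs₁s₁]
      abel
    have B01 : s₁ * star s₂ + (v * s₂) * star (-(v * s₁)) = 0 := by
      rw [st₂, star_neg, hsv11, mul_neg]
      have e1 : (v * s₂) * (s₁ * star v) = v * (s₂ * s₁) * star v := by noncomm_ring
      rw [e1, hc21.eq, hconj _ (mul_mem hs₁m hs₂m)]
      abel
    have B10 : s₂ * star s₁ + -(v * s₁) * star (v * s₂) = 0 := by
      rw [st₁, hsv21, neg_mul]
      have e1 : (v * s₁) * (s₂ * star v) = v * (s₁ * s₂) * star v := by noncomm_ring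
      rw [e1, hconj _ (mul_mem hs₁m hs₂m), hc21.eq]
      abel
    have B11 : s₂ * star s₂ + -(v * s₁) * star (-(v * s₁)) = 1 := by
      rw [st₂, star_neg, hsv11, neg_mul_neg]
      have e1 : (v * s₁) * (s₁ * star v) = v * (s₁ * s₁) * star v := by noncomm_ring
      rw [e1, hs₁s₁, hconj _ hp1m, hs₂s₂]
      abel
    refine ⟨!![s₁, v * s₂; s₂, -(v * s₁)], ⟨?_, ?_, ?_, ?_⟩, ?_, ?_⟩
    · intro i j
      fin_cases i <;> fin_cases j
      · simpa using hs₁m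
      · simpa using mul_mem hvmem hs₂m
      · simpa using hs₂m
      · simpa using neg_mem (mul_mem hvmem hs₁m)
    · have hstarU : star !![s₁, v * s₂; s₂, -(v * s₁)] =
          !![star s₁, star s₂; star (v * s₂), star (-(v * s₁))] := by
        rw [Matrix.eta_fin_two (star !![s₁, v * s₂; s₂, -(v * s₁)])]
        simp [Matrix.star_apply]
      rw [hstarU, Matrix.mul_fin_two, Matrix.one_fin_two, A00, A01, A10, A11]
    · have hstarU : star !![s₁, v * s₂; s₂, -(v * s₁)] =
          !![star s₁, star s₂; star (v * s₂), star (-(v * s₁))] := by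
        rw [Matrix.eta_fin_two (star !![s₁, v * s₂; s₂, -(v * s₁)])]
        simp [Matrix.star_apply]
      rw [hstarU, Matrix.mul_fin_two, Matrix.one_fin_two, B00, B01, B10, B11]
    · intro i j
      fin_cases i <;> fin_cases j
      · show StrictElem M₀ s₁
        refine ⟨hs₁m, ?_⟩
        have e : star s₁ * s₁ = P 0 0 := by rw [st₁, hs₁s₁]
        rw [e]
        exact ⟨(CFC.sqrt_nonneg _), aux_sqrt_le_one h01 h11, aux_strict_sqrt M₀ h01 h11 hstrict⟩
      · show StrictElem M₀ (v * s₂)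
        refine ⟨mul_mem hvmem hs₂m, ?_⟩
        have e : star (v * s₂) * (v * s₂) = 1 - P 0 0 := by rw [hsv21, e₂vv]
        rw [e]
        exact ⟨(CFC.sqrt_nonneg _), aux_sqrt_le_one h02 h12, aux_strict_sqrt M₀ h02 h12 hstrict2⟩
      · show StrictElem M₀ s₂
        refine ⟨hs₂m, ?_⟩
        have e : star s₂ * s₂ = 1 - P 0 0 := by rw [st₂, hs₂s₂]
        rw [e]
        exact ⟨(CFC.sqrt_nonneg _), aux_sqrt_le_one h02 h12, aux_strict_sqrt M₀ h02 h12 hstrict2⟩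
      · show StrictElem M₀ (-(v * s₁))
        refine ⟨neg_mem (mul_mem hvmem hs₁m), ?_⟩
        have e : star (-(v * s₁)) * -(v * s₁) = P 0 0 := by
          rw [star_neg, neg_mul_neg, hsv11, e₁vv]
        rw [e]
        exact ⟨(CFC.sqrt_nonneg _), aux_sqrt_le_one h01 h11, aux_strict_sqrt M₀ h01 h11 hstrict⟩
    · have E00 : P 0 0 = star s₁ * s₁ := by rw [st₁, hs₁s₁]
      have E01 : P 0 1 = star s₁ * (v * s₂) := by rw [st₁, hkey]
      have E10 : P 1 0 = star (v * s₂) * s₁ := by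
        rw [hP10, ← hkey, star_mul, st₁]
      have E11 : P 1 1 = star (v * s₂) * (v * s₂) := by
        rw [hsv21, e₂vv, hP11]
      rw [Matrix.eta_fin_two P]
      rw [E00, E01, E10, E11]
      simp only [Matrix.of_apply, Matrix.cons_val', Matrix.cons_val_zero, Matrix.cons_val_one,
        Matrix.head_cons, Matrix.head_fin_const, Matrix.empty_val', Matrix.cons_val_fin_one]
    · have F00 : (1 : K →L[ℂ] K) - P 0 0 = star s₂ * s₂ := by rw [st₂, hs₂s₂]
      have F01 : (0 : K →L[ℂ] K) - P 0 1 = star s₂ * -(v * s₁) := by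
        rw [st₂, mul_neg, hkey2, zero_sub]
      have F10 : (0 : K →L[ℂ] K) - P 1 0 = star (-(v * s₁)) * s₂ := by
        rw [star_neg, neg_mul, zero_sub, hP10, ← hkey2, star_mul, st₂]
      have F11 : (1 : K →L[ℂ] K) - P 1 1 = star (-(v * s₁)) * -(v * s₁) := by
        rw [star_neg, neg_mul_neg, hsv11, e₁vv, hP11, sub_sub_cancel]
      rw [Matrix.eta_fin_two (1 - P)]
      simp only [Matrix.sub_apply, Matrix.one_fin_two, Fin.isValue, Matrix.of_apply,
        Matrix.cons_val', Matrix.cons_val_zero, Matrix.cons_val_one, Matrix.head_cons,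
        Matrix.head_fin_const, Matrix.empty_val', Matrix.cons_val_fin_one]
      rw [F00, F01, F10, F11]
  · rintro ⟨U, hUall, hPeq, hQeq⟩
    obtain ⟨hUm, hU1, hU2, hUs⟩ := hUall
    have hu₁m : U 0 0 ∈ M₀ := hUm 0 0
    have hu₂m : U 0 1 ∈ M₀ := hUm 0 1
    have hP00 : P 0 0 = star (U 0 0) * U 0 0 := by rw [hPeq]; simp
    have hP11 : P 1 1 = star (U 0 1) * U 0 1 := by rw [hPeq]; simp
    have hrow : U 0 0 * star (U 0 0) + U 0 1 * star (U 0 1) = 1 := by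
      have h := congrFun (congrFun hU2 0) 0
      rw [Matrix.mul_apply, Fin.sum_univ_two] at h
      simpa [Matrix.star_apply, Matrix.one_apply] using h
    have hsum : P 0 0 + P 1 1 = 1 := by
      rw [hP00, hP11, ← hcomm (U 0 0) hu₁m (star (U 0 0)) (star_mem hu₁m),
        ← hcomm (U 0 1) hu₂m (star (U 0 1)) (star_mem hu₂m)]
      exact hrow
    have h0 : (0 : K →L[ℂ] K) ≤ P 0 0 := by rw [hP00]; exact star_mul_self_nonneg _
    have h1 : P 0 0 ≤ 1 := by
      rw [← sub_nonneg]
      have e : (1 : K →L[ℂ] K) - P 0 0 = P 1 1 := by rw [← hsum]; abel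
      rw [e, hP11]
      exact star_mul_self_nonneg _
    obtain ⟨hu₁mem, ha0, ha1, hstrictA⟩ := hUs 0 0
    set a : K →L[ℂ] K := CFC.sqrt (star (U 0 0) * U 0 0) with hadef
    have haa : a * a = star (U 0 0) * U 0 0 :=
      CFC.sqrt_mul_sqrt_self _ (star_mul_self_nonneg _)
    have hasa : IsSelfAdjoint a := IsSelfAdjoint.of_nonneg ha0
    have hba : star (U 0 0) * U 0 0 ≤ a := by
      rw [← haa, ← sub_nonneg]
      set t : K →L[ℂ] K := CFC.sqrt a with htdef
      have htt : t * t = a := CFC.sqrt_mul_sqrt_self _ ha0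
      have hca : Commute (1 - a) a := (Commute.one_left a).sub_left (Commute.refl a)
      have hct : Commute (1 - a) t := aux_commute_sqrt hca ha0
      have hstt : star t = t := (IsSelfAdjoint.of_nonneg (CFC.sqrt_nonneg _)).star_eq
      have e0 : a - a * a = a * (1 - a) := by rw [mul_sub, mul_one]
      have e1 : a * (1 - a) = t * (t * (1 - a)) := by rw [← mul_assoc, htt]
      have e : a - a * a = t * (1 - a) * t := by rw [e0, e1, mul_assoc t (1 - a) t, hct.eq]
      rw [e]
      have h0' := star_left_conjugate_nonneg (sub_nonneg.mpr ha1) t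
      rwa [hstt] at h0'
    refine ⟨hmem, hproj, ⟨h0, h1, ?_, ?_⟩, hsum⟩
    · intro q hqm hq hle
      refine hstrictA.1 q hqm hq ?_
      rw [hP00] at hle
      exact le_trans hle hba
    · intro q hqm hq hq0
      rw [hP00, ← haa] at hq0
      have h1' : star (a * q) * (a * q) = 0 := by
        rw [star_mul, hasa.star_eq, hq.1]
        calc q * a * (a * q) = (q * (a * a)) * q := by noncomm_ring
        _ = 0 := by rw [hq0, zero_mul]
      have h2' : a * q = 0 := (CStarRing.star_mul_self_eq_zero_iff _).mp h1'
      have h3' : q * a = 0 := by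
        have h4' := congrArg star h2'
        rwa [star_mul, hq.1, hasa.star_eq, star_zero] at h4'
      exact hstrictA.2 q hqm hq h3'
end

section
/- (Core of Theorem 10) Let M₀ be a commutative von Neumann algebra with unit 1, and let a₀, b₀ be strict positive elements of M₀ such that a₀² + b₀² ≤ 1 and a₀² + b₀² is strict. Put x₀ = a₀² + b₀². Then there exists a strict projection P in M₂(M₀) such that [[a₀², a₀b₀],[a₀b₀, b₀²]] = (x₀ ⊗ I₂)·P; consequently [[a₀², a₀b₀],[a₀b₀, 1 − a₀²]] = ((1 − x₀) ⊗ I₂)·P₀ + (x₀ ⊗ I₂)·P and [[b₀², −a₀b₀],[−a₀b₀, 1 − b₀²]] = ((1 − x₀) ⊗ I₂)·P₀ + (x₀ ⊗ I₂)·(I₂ − P), where P₀ = [[0,0],[0,1]]. -/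
variable {K : Type} [NormedAddCommGroup K] [InnerProductSpace ℂ K] [CompleteSpace K]

section Aux

set_option linter.unusedSectionVars false

open scoped InnerProductSpace

lemma cancelDR {x : K →L[ℂ] K} (hd : DenseRange ⇑x) {f g : K →L[ℂ] K}
    (h : ∀ ξ, f (x ξ) = g (x ξ)) : f = g :=
  ContinuousLinearMap.coeFn_injective (hd.equalizer f.continuous g.continuous (funext h))

lemma innerLe {x u : K →L[ℂ] K} (h2 : u ≤ x) (η : K) :
    RCLike.re ⟪u η, η⟫_ℂ ≤ RCLike.re ⟪x η, η⟫_ℂ := by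
  have := ((ContinuousLinearMap.le_def u x).mp h2).2 η
  rw [ContinuousLinearMap.reApplyInnerSelf, ContinuousLinearMap.sub_apply, inner_sub_left,
    map_sub] at this
  linarith

lemma symmMove {u : K →L[ℂ] K} (hu : IsSelfAdjoint u) (ξ η : K) :
    ⟪u ξ, η⟫_ℂ = ⟪ξ, u η⟫_ℂ :=
  (ContinuousLinearMap.isSelfAdjoint_iff_isSymmetric.mp hu) ξ η

lemma normSqInner (ξ : K) : (‖ξ‖ : ℝ) ^ 2 = RCLike.re ⟪ξ, ξ⟫_ℂ :=
  (inner_self_eq_norm_sq (𝕜 := ℂ) ξ).symm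

lemma sqBound {x u : K →L[ℂ] K} (hu : IsSelfAdjoint u) (hux : u * x = x * u)
    (h2 : u * u ≤ x) (ξ : K) : ‖(u * u) ξ‖ ≤ ‖x ξ‖ := by
  have key : ‖(u * u) ξ‖ ^ 2 ≤ ‖x ξ‖ * ‖(u * u) ξ‖ := by
    calc ‖(u * u) ξ‖ ^ 2 = RCLike.re ⟪(u * u) ξ, (u * u) ξ⟫_ℂ := normSqInner _
      _ = RCLike.re ⟪(u * u) (u ξ), u ξ⟫_ℂ := by
          congr 1
          calc ⟪(u * u) ξ, (u * u) ξ⟫_ℂ = ⟪u ((u * u) ξ), u ξ⟫_ℂ := (symmMove hu _ _).symm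
            _ = ⟪(u * u) (u ξ), u ξ⟫_ℂ := rfl
      _ ≤ RCLike.re ⟪x (u ξ), u ξ⟫_ℂ := innerLe h2 (u ξ)
      _ = RCLike.re ⟪x ξ, (u * u) ξ⟫_ℂ := by
          congr 1
          have hx : x (u ξ) = u (x ξ) := ContinuousLinearMap.ext_iff.mp hux.symm ξ
          calc ⟪x (u ξ), u ξ⟫_ℂ = ⟪u (x ξ), u ξ⟫_ℂ := by rw [hx]
            _ = ⟪x ξ, u (u ξ)⟫_ℂ := symmMove hu _ _
            _ = ⟪x ξ, (u * u) ξ⟫_ℂ := rfl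
      _ ≤ ‖x ξ‖ * ‖(u * u) ξ‖ :=
          (RCLike.re_le_norm _).trans (norm_inner_le_norm _ _)
  nlinarith [norm_nonneg ((u * u) ξ), norm_nonneg (x ξ)]

lemma mulBound {x u v : K →L[ℂ] K} (hu : IsSelfAdjoint u) (hv : IsSelfAdjoint v)
    (hux : u * x = x * u) (hvx : v * x = x * v)
    (hu2 : u * u ≤ x) (hv2 : v * v ≤ x) (ξ : K) : ‖(u * v) ξ‖ ≤ ‖x ξ‖ := by
  have key : ‖(u * v) ξ‖ ^ 2 ≤ ‖x ξ‖ ^ 2 := by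
    calc ‖(u * v) ξ‖ ^ 2 = RCLike.re ⟪(u * v) ξ, (u * v) ξ⟫_ℂ := normSqInner _
      _ = RCLike.re ⟪(u * u) (v ξ), v ξ⟫_ℂ := by
          congr 1
          calc ⟪u (v ξ), u (v ξ)⟫_ℂ = ⟪u (u (v ξ)), v ξ⟫_ℂ := (symmMove hu _ _).symm
            _ = ⟪(u * u) (v ξ), v ξ⟫_ℂ := rfl
      _ ≤ RCLike.re ⟪x (v ξ), v ξ⟫_ℂ := innerLe hu2 (v ξ)
      _ = RCLike.re ⟪x ξ, (v * v) ξ⟫_ℂ := by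
          congr 1
          have hx : x (v ξ) = v (x ξ) := ContinuousLinearMap.ext_iff.mp hvx.symm ξ
          calc ⟪x (v ξ), v ξ⟫_ℂ = ⟪v (x ξ), v ξ⟫_ℂ := by rw [hx]
            _ = ⟪x ξ, v (v ξ)⟫_ℂ := symmMove hv _ _
            _ = ⟪x ξ, (v * v) ξ⟫_ℂ := rfl
      _ ≤ ‖x ξ‖ * ‖(v * v) ξ‖ :=
          (RCLike.re_le_norm _).trans (norm_inner_le_norm _ _)
      _ ≤ ‖x ξ‖ * ‖x ξ‖ :=
          mul_le_mul_of_nonneg_left (sqBound hv hvx hv2 ξ) (norm_nonneg _)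
      _ = ‖x ξ‖ ^ 2 := by ring
  nlinarith [norm_nonneg ((u * v) ξ), norm_nonneg (x ξ)]

lemma nonnegOfDense {x q : K →L[ℂ] K} (hd : DenseRange ⇑x) (hsa : IsSelfAdjoint q)
    (h : ∀ ξ, 0 ≤ RCLike.re ⟪q (x ξ), x ξ⟫_ℂ) : 0 ≤ q := by
  rw [ContinuousLinearMap.nonneg_iff_isPositive]
  refine ⟨ContinuousLinearMap.isSelfAdjoint_iff_isSymmetric.mp hsa, fun η => ?_⟩
  exact hd.induction_on η
    (isClosed_le continuous_const q.reApplyInnerSelf_continuous) h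

lemma existsRatio (M₀ : VonNeumannAlgebra K) {x r : K →L[ℂ] K} (hxM : x ∈ M₀) (hrM : r ∈ M₀)
    (hd : DenseRange ⇑x) (hb : ∀ ξ, ‖r ξ‖ ≤ ‖x ξ‖) :
    ∃ q : K →L[ℂ] K, q ∈ M₀ ∧ ∀ ξ, q (x ξ) = r ξ := by
  classical
  set S : Submodule ℂ K := LinearMap.range (x : K →ₗ[ℂ] K) with hS
  have hg0 : ∀ {ξ η : K}, x ξ = x η → r ξ = r η := by
    intro ξ η h
    have h1 := hb (ξ - η)
    rw [map_sub, map_sub, h, sub_self, norm_zero] at h1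
    have := norm_le_zero_iff.mp h1
    rwa [sub_eq_zero] at this
  have memS : ∀ ξ : K, x ξ ∈ S := fun ξ => LinearMap.mem_range.mpr ⟨ξ, rfl⟩
  set g : S → K := fun s => r (LinearMap.mem_range.mp s.2).choose with hgdef
  have hgs : ∀ (s : S) (ξ : K), x ξ = (s : K) → g s = r ξ := by
    intro s ξ h
    exact hg0 ((LinearMap.mem_range.mp s.2).choose_spec.trans h.symm)
  set f₀ : S →ₗ[ℂ] K :=
    { toFun := g
      map_add' := by
        intro s t
        obtain ⟨ξ, hξ : x ξ = s⟩ := LinearMap.mem_range.mp s.2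
        obtain ⟨η, hη : x η = t⟩ := LinearMap.mem_range.mp t.2
        show g (s + t) = g s + g t
        rw [hgs (s + t) (ξ + η) (by rw [map_add, hξ, hη]; rfl), hgs s ξ hξ, hgs t η hη, map_add]
      map_smul' := by
        intro c s
        obtain ⟨ξ, hξ : x ξ = s⟩ := LinearMap.mem_range.mp s.2
        show g (c • s) = c • g s
        rw [hgs (c • s) (c • ξ) (by rw [map_smul, hξ]; rfl), hgs s ξ hξ, map_smul] } with hf₀
  have hbnd : ∀ s : S, ‖f₀ s‖ ≤ 1 * ‖s‖ := by
    intro s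
    obtain ⟨ξ, hξ : x ξ = s⟩ := LinearMap.mem_range.mp s.2
    rw [one_mul]
    calc ‖f₀ s‖ = ‖r ξ‖ := by rw [show f₀ s = g s from rfl, hgs s ξ hξ]
      _ ≤ ‖x ξ‖ := hb ξ
      _ = ‖(s : K)‖ := by rw [hξ]
      _ = ‖s‖ := rfl
  set fL : S →L[ℂ] K := f₀.mkContinuous 1 hbnd with hfL
  have hisom : Isometry (S.subtypeL) := isometry_subtype_coe
  have hdense : DenseRange (S.subtypeL) := by
    have h1 : Dense (S : Set K) := by
      have : (S : Set K) = Set.range ⇑x := by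
        rw [hS]; exact LinearMap.coe_range _
      rw [this]; exact hd
    exact h1.denseRange_val
  set q : K →L[ℂ] K := fL.extend S.subtypeL with hq
  have hqx : ∀ ξ, q (x ξ) = r ξ := by
    intro ξ
    have h1 : q (S.subtypeL ⟨x ξ, memS ξ⟩) = fL ⟨x ξ, memS ξ⟩ :=
      ContinuousLinearMap.extend_eq fL hdense hisom.isUniformInducing _
    have h2 : fL ⟨x ξ, memS ξ⟩ = r ξ := hgs ⟨x ξ, memS ξ⟩ ξ rfl
    simpa [h2] using h1
  refine ⟨q, ?_, hqx⟩
  show q ∈ (M₀ : Set (K →L[ℂ] K))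
  rw [← M₀.centralizer_centralizer]
  refine Set.mem_centralizer_iff.mpr fun y hy => ?_
  have hyx : x * y = y * x := hy x hxM
  have hyr : r * y = y * r := hy r hrM
  refine cancelDR hd fun ξ => ?_
  show y (q (x ξ)) = q (y (x ξ))
  have h3 : y (x ξ) = x (y ξ) := ContinuousLinearMap.ext_iff.mp hyx.symm ξ
  rw [hqx ξ, h3, hqx (y ξ)]
  exact (ContinuousLinearMap.ext_iff.mp hyr ξ).symm

lemma denseOfStrict (M₀ : VonNeumannAlgebra K) {x : K →L[ℂ] K} (hxM : x ∈ M₀)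
    (hsx : star x = x) (hstrict : ∀ p ∈ M₀, IsProj p → p * x = 0 → p = 0) :
    DenseRange ⇑x := by
  set U : Submodule ℂ K := LinearMap.ker (x : K →ₗ[ℂ] K) with hU
  haveI : CompleteSpace U := (ContinuousLinearMap.isClosed_ker x).completeSpace_coe
  set e : K →L[ℂ] K := U.subtypeL ∘L U.orthogonalProjection with he
  have heid : ∀ η ∈ U, e η = η := by
    intro η hη
    show (↑(U.orthogonalProjection η) : K) = η
    exact Submodule.starProjection_eq_self_iff.mpr hη
  have hmem : ∀ ξ : K, e ξ ∈ U := fun ξ => (U.orthogonalProjection ξ).2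
  have hse : star e = e := (isSelfAdjoint_starProjection U).star_eq
  have hee : e * e = e := by
    ext ξ
    exact heid (e ξ) (hmem ξ)
  have hxe : x * e = 0 := by
    ext ξ
    exact (LinearMap.mem_ker.mp (hmem ξ))
  have hex : e * x = 0 := by
    rw [← hse, ← hsx, ← star_mul, hxe, star_zero]
  have heM : e ∈ M₀ := by
    show e ∈ (M₀ : Set (K →L[ℂ] K))
    rw [← M₀.centralizer_centralizer]
    refine Set.mem_centralizer_iff.mpr fun y hy => ?_
    have hyx : x * y = y * x := hy x hxM
    have hyx' : x * star y = star y * x := by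
      have := congrArg star hyx
      rw [star_mul, star_mul, hsx] at this
      exact this.symm
    have hmapU : ∀ z : K →L[ℂ] K, x * z = z * x → ∀ η ∈ U, z η ∈ U := by
      intro z hz η hη
      rw [hU, LinearMap.mem_ker]
      show x (z η) = 0
      calc x (z η) = (x * z) η := rfl
        _ = (z * x) η := by rw [hz]
        _ = z (x η) := rfl
        _ = z 0 := by rw [show x η = 0 from LinearMap.mem_ker.mp hη]
        _ = 0 := map_zero z
    have claim1 : e * y * e = y * e := by
      ext ξ
      exact heid (y (e ξ)) (hmapU y hyx (e ξ) (hmem ξ))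
    have claim2 : e * star y * e = star y * e := by
      ext ξ
      exact heid (star y (e ξ)) (hmapU (star y) hyx' (e ξ) (hmem ξ))
    have claim3 : e * y * e = e * y := by
      have := congrArg star claim2
      rw [star_mul, star_mul, star_mul, hse, star_star] at this
      rw [← mul_assoc] at this
      exact this
    rw [← claim1, claim3]
  have he0 : e = 0 := hstrict e heM ⟨hse, hee⟩ hex
  have hker : ∀ ξ : K, x ξ = 0 → ξ = 0 := by
    intro ξ hξ
    have : e ξ = ξ := heid ξ (LinearMap.mem_ker.mpr hξ)
    rw [he0] at this
    simpa using this.symm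
  have hsa : IsSelfAdjoint x := hsx
  have horth : (LinearMap.range (x : K →ₗ[ℂ] K))ᗮ = ⊥ := by
    rw [Submodule.eq_bot_iff]
    intro η hη
    have h1 : ⟪x (x η), η⟫_ℂ = 0 :=
      (Submodule.mem_orthogonal _ η).mp hη (x (x η)) (LinearMap.mem_range.mpr ⟨x η, rfl⟩)
    have h2 : ⟪x η, x η⟫_ℂ = 0 := by
      rw [← h1, symmMove hsa (x η) η]
    exact hker η (inner_self_eq_zero.mp h2)
  have hdense : Dense ((LinearMap.range (x : K →ₗ[ℂ] K) : Submodule ℂ K) : Set K) := by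
    rw [Submodule.dense_iff_topologicalClosure_eq_top,
      Submodule.topologicalClosure_eq_top_iff, horth]
  have : (LinearMap.range (x : K →ₗ[ℂ] K) : Submodule ℂ K) = (Set.range ⇑x : Set K) := LinearMap.coe_range _
  rw [DenseRange, ← this]
  exact hdense

end Aux

set_option maxHeartbeats 1000000 in
open scoped InnerProductSpace in
/-- core of Theorem 10. -/
theorem statement11 (M₀ : VonNeumannAlgebra K)
    (hcomm : ∀ x ∈ M₀, ∀ y ∈ M₀, x * y = y * x)
    {a₀ b₀ : K →L[ℂ] K} (ha₀M : a₀ ∈ M₀) (hb₀M : b₀ ∈ M₀)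
    (ha₀ : StrictPos M₀ a₀) (hb₀ : StrictPos M₀ b₀)
    {x₀ : K →L[ℂ] K} (hx₀ : x₀ = a₀ * a₀ + b₀ * b₀)
    (hle : x₀ ≤ 1) (hstrict : StrictIn M₀ x₀) :
    ∃ P : Matrix (Fin 2) (Fin 2) (K →L[ℂ] K), IsStrictProjMat M₀ P ∧
      !![a₀ * a₀, a₀ * b₀; a₀ * b₀, b₀ * b₀] = !![x₀, 0; 0, x₀] * P ∧
      !![a₀ * a₀, a₀ * b₀; a₀ * b₀, 1 - a₀ * a₀]
        = !![1 - x₀, 0; 0, 1 - x₀] * !![(0 : K →L[ℂ] K), 0; 0, 1]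
          + !![x₀, 0; 0, x₀] * P ∧
      !![b₀ * b₀, -(a₀ * b₀); -(a₀ * b₀), 1 - b₀ * b₀]
        = !![1 - x₀, 0; 0, 1 - x₀] * !![(0 : K →L[ℂ] K), 0; 0, 1]
          + !![x₀, 0; 0, x₀] * (1 - P) := by
  -- basic selfadjointness and membership facts
  have hsa' : IsSelfAdjoint a₀ := IsSelfAdjoint.of_nonneg ha₀.1
  have hsb' : IsSelfAdjoint b₀ := IsSelfAdjoint.of_nonneg hb₀.1
  have hsa : star a₀ = a₀ := hsa'.star_eq
  have hsb : star b₀ = b₀ := hsb'.star_eq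
  have hab : a₀ * b₀ = b₀ * a₀ := hcomm a₀ ha₀M b₀ hb₀M
  have hAM : a₀ * a₀ ∈ M₀ := mul_mem ha₀M ha₀M
  have hBM : b₀ * b₀ ∈ M₀ := mul_mem hb₀M hb₀M
  have hCM : a₀ * b₀ ∈ M₀ := mul_mem ha₀M hb₀M
  have hxM : x₀ ∈ M₀ := by rw [hx₀]; exact add_mem hAM hBM
  have hsA : star (a₀ * a₀) = a₀ * a₀ := by rw [star_mul, hsa]
  have hsB : star (b₀ * b₀) = b₀ * b₀ := by rw [star_mul, hsb]
  have hsC : star (a₀ * b₀) = a₀ * b₀ := by rw [star_mul, hsa, hsb, ← hab]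
  have hsx : star x₀ = x₀ := by rw [hx₀, star_add, hsA, hsB]
  have h0A : (0 : K →L[ℂ] K) ≤ a₀ * a₀ := by
    have := star_mul_self_nonneg a₀; rwa [hsa] at this
  have h0B : (0 : K →L[ℂ] K) ≤ b₀ * b₀ := by
    have := star_mul_self_nonneg b₀; rwa [hsb] at this
  have h0x : (0 : K →L[ℂ] K) ≤ x₀ := by rw [hx₀]; exact add_nonneg h0A h0B
  have hAle : a₀ * a₀ ≤ x₀ := by rw [hx₀]; exact le_add_of_nonneg_right h0B
  have hBle : b₀ * b₀ ≤ x₀ := by rw [hx₀]; exact le_add_of_nonneg_left h0A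
  -- density of the range of x₀
  have hd : DenseRange ⇑x₀ := denseOfStrict M₀ hxM hsx hstrict.2
  have cancelMul : ∀ {f g : K →L[ℂ] K}, f * x₀ = g * x₀ → f = g := by
    intro f g h
    exact cancelDR hd fun ξ => ContinuousLinearMap.ext_iff.mp h ξ
  -- commutation facts
  have hax : a₀ * x₀ = x₀ * a₀ := hcomm a₀ ha₀M x₀ hxM
  have hbx : b₀ * x₀ = x₀ * b₀ := hcomm b₀ hb₀M x₀ hxM
  have hAx : (a₀ * a₀) * x₀ = x₀ * (a₀ * a₀) := hcomm _ hAM _ hxM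
  have hBx : (b₀ * b₀) * x₀ = x₀ * (b₀ * b₀) := hcomm _ hBM _ hxM
  have hCx : (a₀ * b₀) * x₀ = x₀ * (a₀ * b₀) := hcomm _ hCM _ hxM
  have hABc : (a₀ * a₀) * (b₀ * b₀) = (b₀ * b₀) * (a₀ * a₀) := hcomm _ hAM _ hBM
  have hACc : (a₀ * a₀) * (a₀ * b₀) = (a₀ * b₀) * (a₀ * a₀) := hcomm _ hAM _ hCM
  have hBCc : (b₀ * b₀) * (a₀ * b₀) = (a₀ * b₀) * (b₀ * b₀) := hcomm _ hBM _ hCM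
  -- norm bounds
  have hbA : ∀ ξ, ‖(a₀ * a₀) ξ‖ ≤ ‖x₀ ξ‖ := sqBound hsa' hax hAle
  have hbB : ∀ ξ, ‖(b₀ * b₀) ξ‖ ≤ ‖x₀ ξ‖ := sqBound hsb' hbx hBle
  have hbC : ∀ ξ, ‖(a₀ * b₀) ξ‖ ≤ ‖x₀ ξ‖ := mulBound hsa' hsb' hax hbx hAle hBle
  -- construct the entries
  obtain ⟨p₁, hp₁M, hp₁⟩ := existsRatio M₀ hxM hAM hd hbA
  obtain ⟨p, hpM, hp⟩ := existsRatio M₀ hxM hCM hd hbC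
  obtain ⟨p₂, hp₂M, hp₂⟩ := existsRatio M₀ hxM hBM hd hbB
  have hp₁x : p₁ * x₀ = a₀ * a₀ := ContinuousLinearMap.ext hp₁
  have hpx : p * x₀ = a₀ * b₀ := ContinuousLinearMap.ext hp
  have hp₂x : p₂ * x₀ = b₀ * b₀ := ContinuousLinearMap.ext hp₂
  have hxp₁ : x₀ * p₁ = a₀ * a₀ := by
    apply cancelMul
    rw [mul_assoc, hp₁x]
    exact hAx.symm
  have hxp : x₀ * p = a₀ * b₀ := by
    apply cancelMul
    rw [mul_assoc, hpx]
    exact hCx.symm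
  have hxp₂ : x₀ * p₂ = b₀ * b₀ := by
    apply cancelMul
    rw [mul_assoc, hp₂x]
    exact hBx.symm
  -- selfadjointness of the entries
  have hsp₁ : star p₁ = p₁ := by
    apply cancelMul
    have h1 : star p₁ * x₀ = star (x₀ * p₁) := by rw [star_mul, hsx]
    rw [h1, hxp₁, hsA, hp₁x]
  have hsp : star p = p := by
    apply cancelMul
    have h1 : star p * x₀ = star (x₀ * p) := by rw [star_mul, hsx]
    rw [h1, hxp, hsC, hpx]
  have hsp₂ : star p₂ = p₂ := by
    apply cancelMul
    have h1 : star p₂ * x₀ = star (x₀ * p₂) := by rw [star_mul, hsx]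
    rw [h1, hxp₂, hsB, hp₂x]
  -- sum is one
  have hsum : p₁ + p₂ = 1 := by
    apply cancelMul
    rw [add_mul, hp₁x, hp₂x, one_mul]
    exact hx₀.symm
  have hp₂eq : p₂ = 1 - p₁ := by rw [← hsum]; abel
  -- key multiplication helper
  have key : ∀ (q w z : K →L[ℂ] K), q * x₀ = w → z * x₀ = x₀ * z → (q * z) * x₀ = w * z := by
    intro q w z h hz
    rw [mul_assoc, hz, ← mul_assoc, h]
  have hp₁c : p₁ * x₀ = x₀ * p₁ := hp₁x.trans hxp₁.symm
  have hpc : p * x₀ = x₀ * p := hpx.trans hxp.symm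
  have hp₂c : p₂ * x₀ = x₀ * p₂ := hp₂x.trans hxp₂.symm
  have hCC : (a₀ * b₀) * (a₀ * b₀) = (a₀ * a₀) * (b₀ * b₀) := by
    rw [show a₀ * b₀ * (a₀ * b₀) = a₀ * (b₀ * a₀) * b₀ by noncomm_ring, ← hab]
    noncomm_ring
  -- projection equations
  have e1 : p₁ * p₁ + p * p = p₁ := by
    apply cancelMul; apply cancelMul
    rw [add_mul, add_mul, key p₁ _ p₁ hp₁x hp₁c, key p _ p hpx hpc,
      mul_assoc (a₀ * a₀) p₁ x₀, mul_assoc (a₀ * b₀) p x₀, hp₁x, hpx, hCC, hx₀, mul_add]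
  have e2 : p₁ * p + p * p₂ = p := by
    apply cancelMul; apply cancelMul
    rw [add_mul, add_mul, key p₁ _ p hp₁x hpc, key p _ p₂ hpx hp₂c,
      mul_assoc (a₀ * a₀) p x₀, mul_assoc (a₀ * b₀) p₂ x₀, hpx, hp₂x, hACc, hx₀, mul_add]
  have e3 : p * p₁ + p₂ * p = p := by
    apply cancelMul; apply cancelMul
    rw [add_mul, add_mul, key p _ p₁ hpx hp₁c, key p₂ _ p hp₂x hpc,
      mul_assoc (a₀ * b₀) p₁ x₀, mul_assoc (b₀ * b₀) p x₀, hp₁x, hpx, hBCc, hx₀, mul_add]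
  have e4 : p * p + p₂ * p₂ = p₂ := by
    apply cancelMul; apply cancelMul
    rw [add_mul, add_mul, key p _ p hpx hpc, key p₂ _ p₂ hp₂x hp₂c,
      mul_assoc (a₀ * b₀) p x₀, mul_assoc (b₀ * b₀) p₂ x₀, hpx, hp₂x, hCC, hABc, hx₀, mul_add]
  -- positivity
  have h0x' := (ContinuousLinearMap.nonneg_iff_isPositive x₀).mp h0x
  have h0p₁ : (0 : K →L[ℂ] K) ≤ p₁ := by
    refine nonnegOfDense hd hsp₁ fun ξ => ?_
    rw [hp₁ ξ]
    have h1 : (a₀ * a₀) ξ = a₀ (a₀ ξ) := rfl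
    have h2 : a₀ (x₀ ξ) = x₀ (a₀ ξ) := ContinuousLinearMap.ext_iff.mp hax ξ
    rw [h1, symmMove hsa' (a₀ ξ) (x₀ ξ), h2]
    exact h0x'.re_inner_nonneg_right (a₀ ξ)
  have h0p₂ : (0 : K →L[ℂ] K) ≤ p₂ := by
    refine nonnegOfDense hd hsp₂ fun ξ => ?_
    rw [hp₂ ξ]
    have h1 : (b₀ * b₀) ξ = b₀ (b₀ ξ) := rfl
    have h2 : b₀ (x₀ ξ) = x₀ (b₀ ξ) := ContinuousLinearMap.ext_iff.mp hbx ξ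
    rw [h1, symmMove hsb' (b₀ ξ) (x₀ ξ), h2]
    exact h0x'.re_inner_nonneg_right (b₀ ξ)
  have hp₁le1 : p₁ ≤ 1 := by
    have : (0 : K →L[ℂ] K) ≤ 1 - p₁ := by rw [← hp₂eq]; exact h0p₂
    exact sub_nonneg.mp this
  -- strictness of p₁
  have part2 : ∀ q ∈ M₀, IsProj q → q * p₁ = 0 → q = 0 := by
    intro q hqM hqproj hqp
    have h1 : q * (a₀ * a₀) = 0 := by rw [← hp₁x, ← mul_assoc, hqp, zero_mul]
    have h2 : (q * a₀) * star (q * a₀) = 0 := by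
      rw [star_mul, hqproj.1, hsa]
      calc q * a₀ * (a₀ * q) = q * (a₀ * a₀) * q := by noncomm_ring
        _ = 0 := by rw [h1, zero_mul]
    exact ha₀.2.2.2 q hqM hqproj ((CStarRing.mul_star_self_eq_zero_iff (q * a₀)).mp h2)
  have part1 : ∀ q ∈ M₀, IsProj q → q ≤ p₁ → q = 0 := by
    intro q hqM hqproj hqle
    have c1 : 0 ≤ q * p₁ * q - q := by
      have h1 := star_left_conjugate_nonneg (sub_nonneg.mpr hqle) q
      rw [hqproj.1] at h1
      have h2 : q * (p₁ - q) * q = q * p₁ * q - q := by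
        rw [mul_sub, hqproj.2, sub_mul, hqproj.2]
      rwa [h2] at h1
    have c2 : 0 ≤ q - q * p₁ * q := by
      have h1 := star_left_conjugate_nonneg h0p₂ q
      rw [hqproj.1, hp₂eq] at h1
      have h2 : q * (1 - p₁) * q = q - q * p₁ * q := by
        rw [mul_sub, mul_one, sub_mul, hqproj.2]
      rwa [h2] at h1
    have c3 : q * p₁ * q = q := le_antisymm (sub_nonneg.mp c2) (sub_nonneg.mp c1)
    have c4 : q * p₂ = 0 := by
      have hcomq : q * p₂ = p₂ * q := hcomm q hqM p₂ hp₂M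
      have h5 : q * p₂ * q = q * p₂ := by
        calc q * p₂ * q = p₂ * q * q := by rw [hcomq]
          _ = p₂ * (q * q) := by rw [mul_assoc]
          _ = p₂ * q := by rw [hqproj.2]
          _ = q * p₂ := hcomq.symm
      have h6 : q * p₂ * q = 0 := by
        rw [hp₂eq, mul_sub, mul_one, sub_mul, hqproj.2, c3, sub_self]
      rw [← h5, h6]
    have c5 : q * (b₀ * b₀) = 0 := by rw [← hp₂x, ← mul_assoc, c4, zero_mul]
    have c6 : (q * b₀) * star (q * b₀) = 0 := by
      rw [star_mul, hqproj.1, hsb]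
      calc q * b₀ * (b₀ * q) = q * (b₀ * b₀) * q := by noncomm_ring
        _ = 0 := by rw [c5, zero_mul]
    exact hb₀.2.2.2 q hqM hqproj ((CStarRing.mul_star_self_eq_zero_iff (q * b₀)).mp c6)
  -- assemble the matrix
  refine ⟨!![p₁, p; p, p₂], ⟨?_, ⟨?_, ?_⟩, ?_, ?_⟩, ?_, ?_, ?_⟩
  · -- MemMat
    intro i j
    fin_cases i <;> fin_cases j <;> simp <;> assumption
  · -- star P = P
    rw [← Matrix.ext_iff]
    intro i j
    fin_cases i <;> fin_cases j <;>
      simp [Matrix.star_apply, hsp₁, hsp, hsp₂]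
  · -- P * P = P
    rw [← Matrix.ext_iff]
    intro i j
    fin_cases i <;> fin_cases j <;>
      simp [Matrix.mul_apply, Fin.sum_univ_two, e1, e2, e3, e4]
  · -- StrictPos of P 0 0
    show StrictPos M₀ p₁
    exact ⟨h0p₁, hp₁le1, part1, part2⟩
  · -- sum of diagonals
    show p₁ + p₂ = 1
    exact hsum
  · -- first matrix identity
    rw [← Matrix.ext_iff]
    intro i j
    fin_cases i <;> fin_cases j <;>
      simp [Matrix.mul_apply, Fin.sum_univ_two, hxp₁, hxp, hxp₂]
  · -- second matrix identity
    rw [← Matrix.ext_iff]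
    intro i j
    fin_cases i <;> fin_cases j <;>
      simp [Matrix.mul_apply, Fin.sum_univ_two, hxp₁, hxp, hxp₂] <;>
      (rw [hx₀]; abel)
  · -- third matrix identity
    have hOneSub : (1 : Matrix (Fin 2) (Fin 2) (K →L[ℂ] K)) - !![p₁, p; p, p₂]
        = !![1 - p₁, -p; -p, 1 - p₂] := by
      rw [Matrix.one_fin_two, ← Matrix.ext_iff]
      intro i j
      fin_cases i <;> fin_cases j <;>
        simp [Matrix.sub_apply]
    rw [hOneSub, ← Matrix.ext_iff]
    intro i j
    fin_cases i <;> fin_cases j <;>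
      simp [Matrix.mul_apply, Fin.sum_univ_two, mul_sub, hxp₁, hxp, hxp₂] <;>
      (rw [hx₀]; abel)
end
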